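/- For all integers ℓ, j ≥ 1 and p, the double sum ∑_{p=0}^{P} ∑_{r=0}^{p} (-1)^r C(p,r) s(ℓr, ℓr - j) is independent of P once P ≥ 2j+1, i.e., the p-th finite-difference term ∑_{r=0}^{p} (-1)^r C(p,r) s(ℓr, ℓr-j) vanishes for all p > 2j. -/

import Mathlib

/-- Unsigned Stirling numbers of the first kind. -/
def stirling1 : ℕ → ℕ → ℕ
  | 0, 0 => 1
  | 0, _+1 => 0
  | _+1, 0 => 0
  | n+1, k+1 => stirling1 n k + n * stirling1 n (k+1)

/-- `s(n, n-j)` with the convention that it is `0` when `n - j < 0`. -/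
def stirling1Shift (n j : ℕ) : ℤ :=
  if j ≤ n then (stirling1 n (n - j) : ℤ) else 0

open Finset

lemma stirling1_eq_zero_of_lt : ∀ m k, m < k → stirling1 m k = 0 := by
  intro m
  induction m with
  | zero =>
    intro k hk
    cases k with
    | zero => omega
    | succ k => rfl
  | succ m ihm =>
    intro k hk
    cases k with
    | zero => omega
    | succ k =>
      show stirling1 m k + m * stirling1 m (k+1) = 0
      rw [ihm k (by omega), ihm (k+1) (by omega)]
      simp

lemma stirling1_self (n : ℕ) : stirling1 n n = 1 := by
  induction n with
  | zero => rfl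
  | succ n ih =>
    show stirling1 n n + n * stirling1 n (n+1) = 1
    rw [ih, stirling1_eq_zero_of_lt n (n+1) (by omega)]
    simp

lemma stirling1Shift_zero (n : ℕ) : stirling1Shift n 0 = 1 := by
  simp [stirling1Shift, stirling1_self]

lemma stirling1Shift_succ (n j : ℕ) :
    stirling1Shift (n+1) (j+1) = stirling1Shift n (j+1) + n * stirling1Shift n j := by
  by_cases h1 : j + 1 ≤ n
  · have h2 : j ≤ n := by omega
    have h3 : j + 1 ≤ n + 1 := by omega
    simp only [stirling1Shift, if_pos h1, if_pos h2, if_pos h3]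
    have e1 : n + 1 - (j+1) = (n - (j+1)) + 1 := by omega
    have e2 : n - (j+1) + 1 = n - j := by omega
    rw [e1]
    show ((stirling1 n (n - (j+1)) + n * stirling1 n (n - (j+1) + 1) : ℕ) : ℤ) = _
    rw [e2]
    push_cast
    ring
  · by_cases h2 : j ≤ n
    · have hn : n = j := by omega
      subst hn
      simp only [stirling1Shift, if_pos (by omega : n + 1 ≤ n + 1), if_neg h1, if_pos le_rfl,
        Nat.sub_self, Nat.add_sub_cancel]
      show ((stirling1 (n+1) 0 : ℕ) : ℤ) = 0 + n * stirling1 n 0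
      have h0 : stirling1 (n+1) 0 = 0 := rfl
      rw [h0]
      cases n with
      | zero => simp
      | succ m =>
        have h0' : stirling1 (m+1) 0 = 0 := rfl
        rw [h0']; simp
    · have h3 : ¬ (j + 1 ≤ n + 1) := by omega
      simp only [stirling1Shift, if_neg h1, if_neg h2, if_neg h3]
      simp

/-- `f : ℕ → ℤ` behaves like a polynomial of degree at most `d`. -/
def IsDeg (d : ℕ) (f : ℕ → ℤ) : Prop := ∀ n, (fwdDiff (1:ℕ))^[d+1] f n = 0

lemma fwdDiff_iter_eq_zero {f : ℕ → ℤ} (hf : ∀ n, f n = 0) (k : ℕ) :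
    ∀ n, (fwdDiff (1:ℕ))^[k] f n = 0 := by
  induction k generalizing f with
  | zero => simpa using hf
  | succ k ih =>
    intro n
    rw [Function.iterate_succ_apply]
    refine ih (f := fwdDiff (1:ℕ) f) (fun m => ?_) n
    show f (m + 1) - f m = 0
    rw [hf (m+1), hf m, sub_self]

lemma IsDeg.iter_zero {d : ℕ} {f : ℕ → ℤ} (hf : IsDeg d f) {p : ℕ} (hp : d < p) :
    ∀ n, (fwdDiff (1:ℕ))^[p] f n = 0 := by
  intro n
  have hpe : p = (p - (d+1)) + (d+1) := by omega
  rw [hpe, Function.iterate_add_apply]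
  exact fwdDiff_iter_eq_zero hf _ n

lemma IsDeg.mono {d e : ℕ} {f : ℕ → ℤ} (hf : IsDeg d f) (h : d ≤ e) : IsDeg e f :=
  fun n => hf.iter_zero (by omega) n

lemma IsDeg.of_fwdDiff {d : ℕ} {f : ℕ → ℤ} (h : IsDeg d (fwdDiff (1:ℕ) f)) :
    IsDeg (d+1) f := fun n => by
  rw [show d + 1 + 1 = (d+1) + 1 from rfl, Function.iterate_succ_apply]
  exact h n

lemma IsDeg.shift {d : ℕ} {f : ℕ → ℤ} (hf : IsDeg d f) (i : ℕ) :
    IsDeg d (fun n => f (n + i)) := by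
  have key : ∀ k (f : ℕ → ℤ),
      (fwdDiff (1:ℕ))^[k] (fun n => f (n + i)) = fun n => (fwdDiff (1:ℕ))^[k] f (n + i) := by
    intro k
    induction k with
    | zero => intro f; rfl
    | succ k ih =>
      intro f
      rw [Function.iterate_succ_apply, Function.iterate_succ_apply]
      have e : fwdDiff (1:ℕ) (fun n => f (n + i)) = fun n => (fwdDiff (1:ℕ) f) (n + i) := by
        funext n
        show f (n + 1 + i) - f (n + i) = f ((n + i) + 1) - f (n + i)
        congr 2
        omega
      rw [e, ih]
  intro n
  rw [key]
  exact hf (n + i)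

lemma IsDeg.sum {d : ℕ} {α : Type*} (s : Finset α) (F : α → ℕ → ℤ)
    (hF : ∀ a ∈ s, IsDeg d (F a)) : IsDeg d (fun n => ∑ a ∈ s, F a n) := by
  intro n
  have e : (fun n => ∑ a ∈ s, F a n) = ∑ a ∈ s, F a := by
    funext m; simp
  rw [e, fwdDiff_iter_finset_sum]
  simp only [Finset.sum_apply]
  exact Finset.sum_eq_zero fun a ha => hF a ha n

lemma IsDeg.const (c : ℤ) : IsDeg 0 (fun _ => c) := by
  intro n
  show (fun _ : ℕ => c) (n + 1) - (fun _ : ℕ => c) n = 0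
  simp

lemma IsDeg.add {d : ℕ} {f g : ℕ → ℤ} (hf : IsDeg d f) (hg : IsDeg d g) :
    IsDeg d (fun n => f n + g n) := by
  intro n
  have e : (fun n => f n + g n) = f + g := rfl
  rw [e, fwdDiff_iter_add]
  show (fwdDiff (1:ℕ))^[d+1] f n + (fwdDiff (1:ℕ))^[d+1] g n = 0
  rw [hf n, hg n, add_zero]

lemma IsDeg.fwdDiff_isDeg {d : ℕ} {f : ℕ → ℤ} (hf : IsDeg (d+1) f) :
    IsDeg d (fwdDiff (1:ℕ) f) := by
  intro n
  rw [← Function.iterate_succ_apply]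
  exact hf n

lemma IsDeg.mul_id {d : ℕ} {f : ℕ → ℤ} (hf : IsDeg d f) :
    IsDeg (d+1) (fun n => (n : ℤ) * f n) := by
  induction d generalizing f with
  | zero =>
    have hconst : ∀ n, f n = f 0 := by
      intro n
      induction n with
      | zero => rfl
      | succ n ih =>
        have h := hf n
        have h' : f (n + 1) - f n = 0 := h
        have : f (n + 1) = f n := by linarith
        rw [this, ih]
    apply IsDeg.of_fwdDiff
    have e : fwdDiff (1:ℕ) (fun n => (n : ℤ) * f n) = fun _ => f 0 := by
      funext n
      show ((n + 1 : ℕ) : ℤ) * f (n + 1) - (n : ℤ) * f n = f 0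
      rw [hconst (n+1), hconst n]
      push_cast
      ring
    rw [e]
    exact IsDeg.const (f 0)
  | succ d ih =>
    apply IsDeg.of_fwdDiff
    have hdf : IsDeg d (fwdDiff (1:ℕ) f) := hf.fwdDiff_isDeg
    have h1 : IsDeg (d+1) (fun n => (n : ℤ) * (fwdDiff (1:ℕ) f) n) := ih hdf
    have h2 : IsDeg (d+1) (fun n => f (n + 1)) := (hf.shift 1).mono (by omega)
    have key : fwdDiff (1:ℕ) (fun n => (n : ℤ) * f n)
        = fun n : ℕ => ((n : ℤ) * (fwdDiff (1:ℕ) f) n) + f (n + 1) := by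
      funext n
      show ((n + 1 : ℕ) : ℤ) * f (n + 1) - (n : ℤ) * f n
          = (n : ℤ) * (f (n + 1) - f n) + f (n + 1)
      push_cast
      ring
    rw [key]
    exact h1.add h2

lemma IsDeg.comp_mul {d : ℕ} (ℓ : ℕ) {g : ℕ → ℤ} (hg : IsDeg d g) :
    IsDeg d (fun r => g (ℓ * r)) := by
  induction d generalizing g with
  | zero =>
    have hconst : ∀ k m, g (m + k) = g m := by
      intro k
      induction k with
      | zero => simp
      | succ k ihk =>
        intro m
        have h' : g (m + k + 1) - g (m + k) = 0 := hg (m + k)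
        have : g (m + k + 1) = g (m + k) := by linarith
        rw [← Nat.add_assoc, this, ihk]
    intro n
    show g (ℓ * (n + 1)) - g (ℓ * n) = 0
    rw [show ℓ * (n + 1) = ℓ * n + ℓ by ring, hconst ℓ (ℓ * n), sub_self]
  | succ d ih =>
    apply IsDeg.of_fwdDiff
    have hdg : IsDeg d (fwdDiff (1:ℕ) g) := hg.fwdDiff_isDeg
    have hkey : fwdDiff (1:ℕ) (fun r => g (ℓ * r))
        = fun r => (fun n => ∑ i ∈ Finset.range ℓ, (fwdDiff (1:ℕ) g) (n + i)) (ℓ * r) := by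
      funext r
      show g (ℓ * (r + 1)) - g (ℓ * r)
          = ∑ i ∈ Finset.range ℓ, (fwdDiff (1:ℕ) g) (ℓ * r + i)
      have tele := Finset.sum_range_sub (fun i => g (ℓ * r + i)) ℓ
      simp only [Nat.add_zero] at tele
      rw [show ℓ * (r + 1) = ℓ * r + ℓ by ring, ← tele]
      apply Finset.sum_congr rfl
      intro i _
      rfl
    have hhdeg : IsDeg d (fun n => ∑ i ∈ Finset.range ℓ, (fwdDiff (1:ℕ) g) (n + i)) :=
      IsDeg.sum _ _ (fun i _ => hdg.shift i)
    rw [hkey]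
    exact ih hhdeg

lemma isDeg_stirling1Shift (j : ℕ) : IsDeg (2 * j) (fun n => stirling1Shift n j) := by
  induction j with
  | zero =>
    have e : (fun n => stirling1Shift n 0) = fun _ => (1 : ℤ) := by
      funext n; exact stirling1Shift_zero n
    rw [e]
    exact IsDeg.const 1
  | succ j ih =>
    have h1 : IsDeg (2 * j + 1) (fun n : ℕ => (n : ℤ) * stirling1Shift n j) := ih.mul_id
    have h2 : fwdDiff (1:ℕ) (fun n => stirling1Shift n (j+1))
        = fun n : ℕ => (n : ℤ) * stirling1Shift n j := by
      funext n
      show stirling1Shift (n+1) (j+1) - stirling1Shift n (j+1) = (n : ℤ) * stirling1Shift n j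
      rw [stirling1Shift_succ]
      ring
    have h3 : IsDeg (2 * j + 2) (fun n => stirling1Shift n (j+1)) := by
      apply IsDeg.of_fwdDiff
      rw [h2]
      exact h1
    rw [show 2 * (j + 1) = 2 * j + 2 by ring]
    exact h3

/-- For `ℓ, j ≥ 1`, the inner finite-difference term
`∑_{r=0}^p (-1)^r C(p,r) s(ℓr, ℓr-j)` vanishes for all `p > 2j`; consequently the partial
double sums `∑_{p=0}^P ∑_{r=0}^p (-1)^r C(p,r) s(ℓr, ℓr-j)` are independent of `P` once
`P ≥ 2j+1`. -/
theorem altBinomSum_stirling1_stable (ℓ j : ℕ) (hℓ : 1 ≤ ℓ) (hj : 1 ≤ j) :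
    (∀ p : ℕ, 2 * j < p →
        ∑ r ∈ Finset.range (p + 1),
          (-1 : ℤ) ^ r * (p.choose r) * stirling1Shift (ℓ * r) j = 0) ∧
      ∀ P₁ P₂ : ℕ, 2 * j + 1 ≤ P₁ → 2 * j + 1 ≤ P₂ →
        (∑ p ∈ Finset.range (P₁ + 1), ∑ r ∈ Finset.range (p + 1),
            (-1 : ℤ) ^ r * (p.choose r) * stirling1Shift (ℓ * r) j) =
          ∑ p ∈ Finset.range (P₂ + 1), ∑ r ∈ Finset.range (p + 1),
            (-1 : ℤ) ^ r * (p.choose r) * stirling1Shift (ℓ * r) j := by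
  set f : ℕ → ℤ := fun r => stirling1Shift (ℓ * r) j with hf
  have hdeg : IsDeg (2 * j) f := (isDeg_stirling1Shift j).comp_mul ℓ
  have main : ∀ p : ℕ, 2 * j < p →
      ∑ r ∈ Finset.range (p + 1),
        (-1 : ℤ) ^ r * (p.choose r) * stirling1Shift (ℓ * r) j = 0 := by
    intro p hp
    have hzero : (fwdDiff (1:ℕ))^[p] f 0 = 0 := hdeg.iter_zero hp 0
    have hsum := fwdDiff_iter_eq_sum_shift (1:ℕ) f p 0
    rw [hzero] at hsum
    have key : ∑ r ∈ Finset.range (p + 1),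
        (-1 : ℤ) ^ r * (p.choose r) * stirling1Shift (ℓ * r) j
        = (-1 : ℤ) ^ p * ∑ k ∈ Finset.range (p + 1),
            ((-1 : ℤ) ^ (p - k) * (p.choose k)) • f (0 + k • 1) := by
      rw [Finset.mul_sum]
      apply Finset.sum_congr rfl
      intro k hk
      have hkp : k ≤ p := by
        simp only [Finset.mem_range] at hk; omega
      have e1 : (0 + k • 1 : ℕ) = k := by simp
      rw [e1]
      have e2 : (-1 : ℤ) ^ p * (-1 : ℤ) ^ (p - k) = (-1 : ℤ) ^ k := by
        have e3 : p + (p - k) = 2 * (p - k) + k := by omega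
        rw [← pow_add, e3, pow_add, pow_mul]
        simp
      rw [smul_eq_mul, ← mul_assoc, ← mul_assoc, e2, hf]
    rw [key, ← hsum, mul_zero]
  refine ⟨main, ?_⟩
  have stable : ∀ P : ℕ, 2 * j + 1 ≤ P →
      (∑ p ∈ Finset.range (P + 1), ∑ r ∈ Finset.range (p + 1),
          (-1 : ℤ) ^ r * (p.choose r) * stirling1Shift (ℓ * r) j)
        = ∑ p ∈ Finset.range (2 * j + 1 + 1), ∑ r ∈ Finset.range (p + 1),
            (-1 : ℤ) ^ r * (p.choose r) * stirling1Shift (ℓ * r) j := by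
    intro P hP
    induction P with
    | zero => omega
    | succ P ihP =>
      rcases Nat.lt_or_ge P (2 * j + 1) with h | h
      · have e : P + 1 = 2 * j + 1 := by omega
        rw [e]
      · rw [Finset.sum_range_succ, ihP h, main (P + 1) (by omega), add_zero]
  intro P₁ P₂ h₁ h₂
  rw [stable P₁ h₁, stable P₂ h₂]
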